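/- For all ℓ > 2·arcsinh(1), one has sinh(ℓ/4)·arcsinh(sin θ_ℓ) ≥ 1/3, where sin θ_ℓ = 2/√5 if ℓ < 2·arccosh(3/2) and sin θ_ℓ = √(2cosh(ℓ/2)+1)/(cosh(ℓ/2)+1) otherwise. -/

import Mathlib

set_option maxHeartbeats 1000000


open Real

/-- The inverse hyperbolic cosine. -/
noncomputable def arcosh (x : ℝ) : ℝ := Real.log (x + Real.sqrt (x ^ 2 - 1))

/-- The lower bound `sin θ_ℓ` on the sine of the intersection angle of two
once-intersecting systoles of length `ℓ`. -/
noncomputable def sinTheta (ℓ : ℝ) : ℝ :=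
  if ℓ < 2 * _root_.arcosh (3 / 2) then 2 / Real.sqrt 5
  else Real.sqrt (2 * Real.cosh (ℓ / 2) + 1) / (Real.cosh (ℓ / 2) + 1)

lemma arsinh_one_ge : (5 : ℝ) / 6 ≤ Real.arsinh 1 := by
  have h1 : Real.arsinh 1 = Real.log (1 + Real.sqrt 2) := by
    rw [Real.arsinh]; norm_num
  rw [h1, Real.le_log_iff_exp_le (by positivity)]
  have h2 : Real.exp (1 / 12 : ℝ) ≤ 12 / 11 := by
    have h3 := Real.add_one_le_exp (-(1 / 12 : ℝ))
    have h4 : Real.exp (-(1 / 12 : ℝ)) = (Real.exp (1 / 12 : ℝ))⁻¹ := Real.exp_neg _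
    have h5 : (0 : ℝ) < Real.exp (1 / 12) := Real.exp_pos _
    have h6 : Real.exp (1 / 12 : ℝ) * (Real.exp (1 / 12 : ℝ))⁻¹ = 1 :=
      mul_inv_cancel₀ (ne_of_gt h5)
    rw [h4] at h3
    nlinarith
  have h6 : Real.exp (5 / 6 : ℝ) = Real.exp (1 / 12 : ℝ) ^ (10 : ℕ) := by
    rw [← Real.exp_nat_mul]; norm_num
  have h7 : Real.exp (5 / 6 : ℝ) ≤ (12 / 11 : ℝ) ^ (10 : ℕ) := by
    rw [h6]
    exact pow_le_pow_left₀ (Real.exp_pos _).le h2 10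
  have h8 : (141 / 100 : ℝ) ≤ Real.sqrt 2 := by
    rw [show (2 : ℝ) = (141 / 100 : ℝ) ^ 2 + (2 - (141 / 100) ^ 2) by ring]
    calc (141 / 100 : ℝ) = Real.sqrt ((141 / 100) ^ 2) := by
            rw [Real.sqrt_sq]; norm_num
      _ ≤ _ := Real.sqrt_le_sqrt (by norm_num)
  have h9 : ((12 : ℝ) / 11) ^ (10 : ℕ) ≤ 1 + 141 / 100 := by norm_num
  linarith

lemma convexOn_sinh : ConvexOn ℝ (Set.Ici (0 : ℝ)) Real.sinh := by
  apply convexOn_of_deriv2_nonneg (convex_Ici 0)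
    Real.continuous_sinh.continuousOn
    (Real.differentiable_sinh.differentiableOn)
  · rw [Real.deriv_sinh]
    exact Real.differentiable_cosh.differentiableOn
  · intro x hx
    rw [Function.iterate_succ, Function.iterate_one, Function.comp_apply,
      Real.deriv_sinh, Real.deriv_cosh]
    rw [interior_Ici] at hx
    exact Real.sinh_nonneg_iff.2 (le_of_lt hx)

lemma arsinh_lower {x : ℝ} (hx0 : 0 ≤ x) (hx1 : x ≤ 1) :
    x * Real.arsinh 1 ≤ Real.arsinh x := by
  have ha : (0 : ℝ) ≤ Real.arsinh 1 := by
    rw [Real.arsinh_nonneg_iff]; norm_num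
  have key : Real.sinh (x * Real.arsinh 1) ≤ x := by
    have := convexOn_sinh.2 (Set.mem_Ici.2 (le_refl (0:ℝ))) (Set.mem_Ici.2 ha)
      (show (0:ℝ) ≤ 1 - x by linarith) hx0 (by ring)
    simp only [smul_eq_mul, mul_zero, zero_add, Real.sinh_zero,
      mul_zero, zero_add] at this
    calc Real.sinh (x * Real.arsinh 1) ≤ (1 - x) * Real.sinh 0 + x * Real.sinh (Real.arsinh 1) := by
          simpa using this
      _ = x := by rw [Real.sinh_zero, Real.sinh_arsinh]; ring
  calc x * Real.arsinh 1 = Real.arsinh (Real.sinh (x * Real.arsinh 1)) :=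
        (Real.arsinh_sinh _).symm
    _ ≤ Real.arsinh x := Real.arsinh_le_arsinh.2 key

theorem sinh_mul_arsinh_ge (ℓ : ℝ) (hℓ : 2 * Real.arsinh 1 < ℓ) :
    1 / 3 ≤ Real.sinh (ℓ / 4) * Real.arsinh (sinTheta ℓ) := by
  have ha1 : (5 : ℝ) / 6 ≤ Real.arsinh 1 := arsinh_one_ge
  have sqrt2 : (7 / 5 : ℝ) ≤ Real.sqrt 2 := by
    rw [show (7 / 5 : ℝ) = Real.sqrt ((7/5)^2) by rw [Real.sqrt_sq]; norm_num]
    exact Real.sqrt_le_sqrt (by norm_num)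
  have s5pos : (0 : ℝ) < Real.sqrt 5 := Real.sqrt_pos.2 (by norm_num)
  have s5sq : Real.sqrt 5 ^ 2 = 5 := Real.sq_sqrt (by norm_num)
  by_cases h : ℓ < 2 * _root_.arcosh (3 / 2)
  · -- Case 1
    have hst : sinTheta ℓ = 2 / Real.sqrt 5 := by rw [sinTheta, if_pos h]
    -- lower bound on sinh (ℓ/4)
    set t := Real.sinh (Real.arsinh 1 / 2) with ht
    have htsinh : t ≤ Real.sinh (ℓ / 4) := Real.sinh_le_sinh.2 (by linarith)
    have ht0 : 0 ≤ t := Real.sinh_nonneg_iff.2 (by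
      have : (0 : ℝ) ≤ Real.arsinh 1 := by rw [Real.arsinh_nonneg_iff]; norm_num
      linarith)
    have hcosh : Real.cosh (Real.arsinh 1) = Real.sqrt 2 := by
      rw [Real.cosh_arsinh]; norm_num
    have htsq : 1 + 2 * t ^ 2 = Real.sqrt 2 := by
      have h2 : Real.cosh (2 * (Real.arsinh 1 / 2)) =
          Real.cosh (Real.arsinh 1 / 2) ^ 2 + Real.sinh (Real.arsinh 1 / 2) ^ 2 :=
        Real.cosh_two_mul _
      have h3 : Real.cosh (Real.arsinh 1 / 2) ^ 2 =
          Real.sinh (Real.arsinh 1 / 2) ^ 2 + 1 := Real.cosh_sq _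
      have h4 : 2 * (Real.arsinh 1 / 2) = Real.arsinh 1 := by ring
      rw [h4, hcosh] at h2
      rw [h3, ← ht] at h2
      linarith
    have ht5 : 1 / Real.sqrt 5 ≤ t := by
      have htsq' : (1 / Real.sqrt 5) ^ 2 ≤ t ^ 2 := by
        rw [div_pow, one_pow, s5sq]
        nlinarith
      have h15 : (0 : ℝ) ≤ 1 / Real.sqrt 5 := by positivity
      nlinarith
    -- lower bound on arsinh (2/√5)
    have hx0 : (0 : ℝ) ≤ 2 / Real.sqrt 5 := by positivity
    have hx1 : 2 / Real.sqrt 5 ≤ 1 := by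
      rw [div_le_one s5pos]
      nlinarith
    have harc : 2 / Real.sqrt 5 * (5 / 6) ≤ Real.arsinh (2 / Real.sqrt 5) := by
      calc 2 / Real.sqrt 5 * (5 / 6) ≤ 2 / Real.sqrt 5 * Real.arsinh 1 := by
            apply mul_le_mul_of_nonneg_left ha1 hx0
        _ ≤ _ := arsinh_lower hx0 hx1
    rw [hst]
    calc (1 : ℝ) / 3 = (1 / Real.sqrt 5) * (2 / Real.sqrt 5 * (5 / 6)) := by
          field_simp
          nlinarith
      _ ≤ Real.sinh (ℓ / 4) * Real.arsinh (2 / Real.sqrt 5) := by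
          apply mul_le_mul (by linarith) harc (by positivity) (by linarith [Real.sinh_nonneg_iff.2 (show (0:ℝ) ≤ ℓ/4 by nlinarith [Real.arsinh_nonneg_iff.2 (show (0:ℝ) ≤ 1 by norm_num)])])
  · -- Case 2
    push_neg at h
    have hst : sinTheta ℓ =
        Real.sqrt (2 * Real.cosh (ℓ / 2) + 1) / (Real.cosh (ℓ / 2) + 1) := by
      rw [sinTheta, if_neg (not_lt.2 h)]
    set s := Real.sinh (ℓ / 4) with hs
    have hℓpos : 0 < ℓ := by
      have : (0 : ℝ) < Real.arsinh 1 := by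
        rw [show (0:ℝ) = Real.arsinh 0 by simp]
        exact Real.arsinh_lt_arsinh.2 (by norm_num)
      linarith
    have hs0 : 0 ≤ s := Real.sinh_nonneg_iff.2 (by linarith)
    -- cosh (ℓ/2) = 2 s^2 + 1
    have hc : Real.cosh (ℓ / 2) = 2 * s ^ 2 + 1 := by
      have h2 : Real.cosh (2 * (ℓ / 4)) =
          Real.cosh (ℓ / 4) ^ 2 + Real.sinh (ℓ / 4) ^ 2 := Real.cosh_two_mul _
      have h3 : Real.cosh (ℓ / 4) ^ 2 = Real.sinh (ℓ / 4) ^ 2 + 1 := Real.cosh_sq _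
      have h4 : 2 * (ℓ / 4) = ℓ / 2 := by ring
      rw [h4, h3] at h2
      rw [h2, ← hs]; ring
    -- cosh (ℓ/2) ≥ 3/2, hence s ≥ 1/2
    have harc32 : Real.cosh (_root_.arcosh (3 / 2)) = 3 / 2 := by
      have h5 : Real.sqrt ((3 / 2 : ℝ) ^ 2 - 1) = Real.sqrt 5 / 2 := by
        rw [show ((3/2:ℝ)^2 - 1) = (Real.sqrt 5 / 2)^2 by rw [div_pow, div_pow, s5sq]; norm_num]
        exact Real.sqrt_sq (by positivity)
      rw [_root_.arcosh, h5, Real.cosh_eq, Real.exp_log (by positivity), Real.exp_neg,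
        Real.exp_log (by positivity)]
      have h6 : (3 / 2 + Real.sqrt 5 / 2) * (3 / 2 - Real.sqrt 5 / 2) = 1 := by nlinarith
      have h7 : (3 / 2 + Real.sqrt 5 / 2 : ℝ)⁻¹ = 3 / 2 - Real.sqrt 5 / 2 := by
        field_simp
        nlinarith
      rw [h7]; ring
    have harcnn : 0 ≤ _root_.arcosh (3 / 2) := by
      rw [_root_.arcosh]
      apply Real.log_nonneg
      have := Real.sqrt_nonneg ((3 / 2 : ℝ) ^ 2 - 1)
      linarith
    have hcge : (3 : ℝ) / 2 ≤ Real.cosh (ℓ / 2) := by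
      rw [← harc32]
      rw [Real.cosh_le_cosh]
      rw [abs_of_nonneg harcnn, abs_of_nonneg (by linarith : (0:ℝ) ≤ ℓ / 2)]
      linarith
    have hshalf : (1 : ℝ) / 2 ≤ s := by nlinarith [hc, hcge]
    -- the key algebra
    set u := Real.sqrt (2 * Real.cosh (ℓ / 2) + 1) with hu
    have hu0 : 0 ≤ u := Real.sqrt_nonneg _
    have husq : u ^ 2 = 4 * s ^ 2 + 3 := by
      rw [hu, Real.sq_sqrt (by nlinarith), hc]; ring
    have hkey : (4 / 5 : ℝ) * (s ^ 2 + 1) ≤ s * u := by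
      have hsq : ((4 / 5 : ℝ) * (s ^ 2 + 1)) ^ 2 ≤ (s * u) ^ 2 := by
        have : (s * u) ^ 2 = s ^ 2 * (4 * s ^ 2 + 3) := by rw [mul_pow, husq]
        rw [this]
        nlinarith [sq_nonneg s, hshalf]
      have h40 : (0 : ℝ) ≤ 4 / 5 * (s ^ 2 + 1) := by positivity
      nlinarith [mul_nonneg hs0 hu0]
    -- sinTheta ∈ [0, 1]
    have hden : (0 : ℝ) < Real.cosh (ℓ / 2) + 1 := by linarith [Real.cosh_pos (ℓ / 2)]
    have hstv : sinTheta ℓ = u / (2 * s ^ 2 + 2) := by rw [hst, hc]; ring_nf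
    have hden' : (0 : ℝ) < 2 * s ^ 2 + 2 := by positivity
    have hst0 : 0 ≤ sinTheta ℓ := by rw [hstv]; positivity
    have hst1 : sinTheta ℓ ≤ 1 := by
      rw [hstv, div_le_one hden']
      nlinarith [husq, sq_nonneg (2 * s ^ 2 + 2 - u), hu0]
    have harsinh : sinTheta ℓ * (5 / 6) ≤ Real.arsinh (sinTheta ℓ) := by
      calc sinTheta ℓ * (5 / 6) ≤ sinTheta ℓ * Real.arsinh 1 :=
            mul_le_mul_of_nonneg_left ha1 hst0
        _ ≤ _ := arsinh_lower hst0 hst1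
    have hfinal : (1 : ℝ) / 3 ≤ s * (sinTheta ℓ * (5 / 6)) := by
      rw [hstv]
      rw [show s * (u / (2 * s ^ 2 + 2) * (5 / 6)) = (s * u) * (5 / 6) / (2 * s ^ 2 + 2) by ring]
      rw [le_div_iff₀ hden']
      nlinarith [hkey]
    calc (1 : ℝ) / 3 ≤ s * (sinTheta ℓ * (5 / 6)) := hfinal
      _ ≤ s * Real.arsinh (sinTheta ℓ) := mul_le_mul_of_nonneg_left harsinh hs0
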